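/- Let a, b, N be positive integers such that both a and b are coprime to N. Then vrm(|Γ(a,b,N)|) is a finite axial subset of ℝ³_{≥0} in general position. -/

import Mathlib

/-- The box `Π(A)` spanned by a (finite nonempty) set `A ⊆ ℝⁿ_{≥0}`:
all points with nonnegative coordinates bounded by the coordinatewise maxima of `A`. -/
def box {n : ℕ} (A : Set (Fin n → ℝ)) : Set (Fin n → ℝ) :=
  {x | ∀ i, 0 ≤ x i ∧ x i ≤ sSup ((fun p => p i) '' A)}

/-- The set of Voronoi relative minima of `S`: points `g ∈ S` such that the box
`Π({g})` contains no point of `S \ {g}`. -/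
def vrm {n : ℕ} (S : Set (Fin n → ℝ)) : Set (Fin n → ℝ) :=
  {g | g ∈ S ∧ ∀ p ∈ S, p ≠ g → p ∉ box {g}}

/-- A nonempty finite subset `F ⊆ vrm S` is minimal if the box `Π(F)` contains
no point of `vrm S \ F`. -/
def IsMinimal {n : ℕ} (S F : Set (Fin n → ℝ)) : Prop :=
  F.Nonempty ∧ F.Finite ∧ F ⊆ vrm S ∧ ∀ p ∈ vrm S, p ∉ F → p ∉ box F

/-- `p` is a point on the `j`-th coordinate axis, different from the origin. -/
def OnAxis (j : Fin 3) (p : Fin 3 → ℝ) : Prop :=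
  p ≠ 0 ∧ ∀ k, k ≠ j → p k = 0

/-- `S ⊆ ℝ³` is axial if it contains a point on each of the three coordinate axes. -/
def Axial (S : Set (Fin 3 → ℝ)) : Prop :=
  ∀ j : Fin 3, ∃ p ∈ S, ∀ k, k ≠ j → p k = 0

/-- A finite axial set `S ⊆ ℝ³_{≥0}` is in general position if (i) each coordinate
plane contains exactly two points of `S`, neither at the origin, lying on the two
coordinate axes contained in that plane, and (ii) every other plane parallel to a
coordinate plane contains at most one point of `S`. -/
def GeneralPosition (S : Set (Fin 3 → ℝ)) : Prop :=
  (∀ i : Fin 3, ∃ p q : Fin 3 → ℝ, p ≠ q ∧ {r | r ∈ S ∧ r i = 0} = {p, q} ∧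
    ∃ j k : Fin 3, j ≠ i ∧ k ≠ i ∧ j ≠ k ∧ OnAxis j p ∧ OnAxis k q) ∧
  (∀ i : Fin 3, ∀ c : ℝ, c ≠ 0 → {r | r ∈ S ∧ r i = c}.Subsingleton)

/-- The rank-1 lattice `Γ(a,b,N) = {m₁·(1,a,b) + m₂·(0,N,0) + m₃·(0,0,N)} ⊆ ℝ³`. -/
def Gamma (a b N : ℤ) : Set (Fin 3 → ℝ) :=
  {p | ∃ m₁ m₂ m₃ : ℤ,
    p = ![(m₁ : ℝ), (m₁ : ℝ) * a + (m₂ : ℝ) * N, (m₁ : ℝ) * b + (m₃ : ℝ) * N]}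

/-- `|Γ| = {(|x₁|,…,|xₙ|) : x ∈ Γ} \ {0}`. -/
def absSet {n : ℕ} (L : Set (Fin n → ℝ)) : Set (Fin n → ℝ) :=
  {q | (∃ p ∈ L, ∀ i, q i = |p i|) ∧ q ≠ 0}

/-- `|x|_N = min(x mod N, (−x) mod N)`, the distance from `x` to the nearest
multiple of `N`. -/
def distN (N x : ℤ) : ℤ := min (x % N) ((-x) % N)



/- ### distN lemmas -/

lemma distN_nonneg {N x : ℤ} (hN : 0 < N) : 0 ≤ distN N x :=
  le_min (Int.emod_nonneg x hN.ne') (Int.emod_nonneg (-x) hN.ne')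

lemma distN_lt {N x : ℤ} (hN : 0 < N) : distN N x < N :=
  lt_of_le_of_lt (min_le_left _ _) (Int.emod_lt_of_pos x hN)

lemma distN_congr {N x y : ℤ} (h : N ∣ x - y) : distN N x = distN N y := by
  obtain ⟨k, hk⟩ := h
  have hx : x = y + N * k := by linarith
  subst hx
  have h2 : -(y + N * k) = -y + N * (-k) := by ring
  simp only [distN, h2, Int.add_mul_emod_self_left]

lemma distN_neg (N x : ℤ) : distN N (-x) = distN N x := by
  simp [distN, min_comm]

lemma distN_eq_zero {N x : ℤ} (h : N ∣ x) : distN N x = 0 := by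
  have h1 : x % N = 0 := Int.emod_eq_zero_of_dvd h
  have h2 : (-x) % N = 0 := Int.emod_eq_zero_of_dvd (dvd_neg.mpr h)
  simp [distN, h1, h2]

lemma dvd_of_distN_eq_zero {N x : ℤ} (h : distN N x = 0) : N ∣ x := by
  unfold distN at h
  rcases min_cases (x % N) ((-x) % N) with ⟨h1, _⟩ | ⟨h1, _⟩
  · exact Int.dvd_of_emod_eq_zero (h1 ▸ h)
  · have := Int.dvd_of_emod_eq_zero (h1 ▸ h)
    exact (dvd_neg).mp this

lemma emod_le_self' {N y : ℤ} (hN : 0 < N) (hy : 0 ≤ y) : y % N ≤ y := by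
  have h1 : y % N = y - N * (y / N) := by rw [Int.emod_def]
  have h2 : 0 ≤ y / N := Int.ediv_nonneg hy hN.le
  nlinarith

lemma distN_le_abs {N x y : ℤ} (hN : 0 < N) (h : N ∣ y - x) : distN N x ≤ |y| := by
  have key : ∀ u v : ℤ, N ∣ v - u → u % N = v % N := by
    intro u v huv
    obtain ⟨k, hk⟩ := huv
    have : u = v + N * (-k) := by linarith
    rw [this, Int.add_mul_emod_self_left]
  rcases le_or_gt 0 y with hy | hy
  · have h1 : x % N = y % N := key x y h
    calc distN N x ≤ x % N := min_le_left _ _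
      _ = y % N := h1
      _ ≤ y := emod_le_self' hN hy
      _ = |y| := (abs_of_nonneg hy).symm
  · have h' : N ∣ (-y) - (-x) := by
      obtain ⟨k, hk⟩ := h; exact ⟨-k, by linarith⟩
    have h1 : (-x) % N = (-y) % N := key (-x) (-y) h'
    calc distN N x ≤ (-x) % N := min_le_right _ _
      _ = (-y) % N := h1
      _ ≤ -y := emod_le_self' hN (by linarith)
      _ = |y| := (abs_of_neg hy).symm

lemma distN_realize {N x : ℤ} (hN : 0 < N) : ∃ k : ℤ, |x + k * N| = distN N x := by
  rcases le_total (x % N) ((-x) % N) with h | h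
  · refine ⟨-(x / N), ?_⟩
    have h2 : x + -(x / N) * N = x % N := by rw [Int.emod_def]; ring
    rw [h2, abs_of_nonneg (Int.emod_nonneg x hN.ne')]
    simp [distN, min_eq_left h]
  · refine ⟨(-x) / N, ?_⟩
    have h2 : x + ((-x) / N) * N = -((-x) % N) := by rw [Int.emod_def]; ring
    rw [h2, abs_neg, abs_of_nonneg (Int.emod_nonneg _ hN.ne')]
    simp [distN, min_eq_right h]

lemma distN_inj {N x y : ℤ} (h : distN N x = distN N y) : N ∣ x - y ∨ N ∣ x + y := by
  have key : ∀ u v : ℤ, u % N = v % N → N ∣ u - v := by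
    intro u v huv
    have h1 : u % N - v % N = 0 := by omega
    have h2 : (u - v) % N = 0 := by
      rw [Int.sub_emod, h1]; simp
    exact Int.dvd_of_emod_eq_zero h2
  unfold distN at h
  rcases min_cases (x % N) ((-x) % N) with ⟨h1, _⟩ | ⟨h1, _⟩ <;>
    rcases min_cases (y % N) ((-y) % N) with ⟨h2, _⟩ | ⟨h2, _⟩
  · exact Or.inl (key x y (by rw [← h1, ← h2, h]))
  · have := key x (-y) (by rw [← h1, ← h2, h])
    exact Or.inr (by simpa [sub_neg_eq_add] using this)
  · have := key (-x) y (by rw [← h1, ← h2, h])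
    rcases this with ⟨k, hk⟩
    exact Or.inr ⟨-k, by linarith⟩
  · have := key (-x) (-y) (by rw [← h1, ← h2, h])
    rcases this with ⟨k, hk⟩
    exact Or.inl ⟨-k, by linarith⟩

lemma distN_mul_congr {N m m' c : ℤ} (h : N ∣ m - m' ∨ N ∣ m + m') :
    distN N (m * c) = distN N (m' * c) := by
  rcases h with h | h
  · apply distN_congr
    obtain ⟨k, hk⟩ := h
    exact ⟨k * c, by rw [show m * c - m' * c = (m - m') * c by ring, hk]; ring⟩
  · rw [← distN_neg N (m' * c)]
    apply distN_congr
    obtain ⟨k, hk⟩ := h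
    exact ⟨k * c, by rw [show m * c - -(m' * c) = (m + m') * c by ring, hk]; ring⟩

/- ### membership lemmas -/

lemma mem_box_singleton {n : ℕ} (g x : Fin n → ℝ) :
    x ∈ box {g} ↔ ∀ i, 0 ≤ x i ∧ x i ≤ g i := by
  simp [box, Set.image_singleton]

lemma mem_absGamma (a b N : ℤ) (q : Fin 3 → ℝ) :
    q ∈ absSet (Gamma a b N) ↔
      ((∃ m₁ m₂ m₃ : ℤ, q 0 = ((|m₁| : ℤ) : ℝ) ∧ q 1 = ((|m₁ * a + m₂ * N| : ℤ) : ℝ) ∧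
        q 2 = ((|m₁ * b + m₃ * N| : ℤ) : ℝ)) ∧ q ≠ 0) := by
  constructor
  · rintro ⟨⟨p, ⟨m₁, m₂, m₃, rfl⟩, hq⟩, hq0⟩
    refine ⟨⟨m₁, m₂, m₃, ?_, ?_, ?_⟩, hq0⟩
    · rw [hq 0]; push_cast; simp
    · rw [hq 1]; push_cast; simp
    · rw [hq 2]; push_cast; simp
  · rintro ⟨⟨m₁, m₂, m₃, h0, h1, h2⟩, hq0⟩
    refine ⟨⟨![(m₁ : ℝ), (m₁ : ℝ) * a + (m₂ : ℝ) * N, (m₁ : ℝ) * b + (m₃ : ℝ) * N],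
      ⟨m₁, m₂, m₃, rfl⟩, ?_⟩, hq0⟩
    intro i
    fin_cases i
    · show q 0 = _; rw [h0]; push_cast; simp
    · show q 1 = _; rw [h1]; push_cast; simp
    · show q 2 = _; rw [h2]; push_cast; simp

/-- The candidate points `v(m) = (m, |ma|_N, |mb|_N)`. -/
def vv (a b N m : ℤ) : Fin 3 → ℝ :=
  ![(m : ℝ), ((distN N (m * a) : ℤ) : ℝ), ((distN N (m * b) : ℤ) : ℝ)]

@[simp] lemma vv_zero (a b N m : ℤ) : vv a b N m 0 = (m : ℝ) := rfl
@[simp] lemma vv_one (a b N m : ℤ) : vv a b N m 1 = ((distN N (m * a) : ℤ) : ℝ) := rfl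
@[simp] lemma vv_two (a b N m : ℤ) : vv a b N m 2 = ((distN N (m * b) : ℤ) : ℝ) := rfl

lemma vv_mem (a b N : ℤ) (hN : 1 ≤ N) {m : ℤ} (hm : 1 ≤ m) :
    vv a b N m ∈ absSet (Gamma a b N) := by
  obtain ⟨k₂, hk₂⟩ := distN_realize (x := m * a) (by omega : (0:ℤ) < N)
  obtain ⟨k₃, hk₃⟩ := distN_realize (x := m * b) (by omega : (0:ℤ) < N)
  rw [mem_absGamma]
  constructor
  · exact ⟨m, k₂, k₃, by simp [abs_of_nonneg (by omega : (0:ℤ) ≤ m)],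
      by rw [vv_one, hk₂.symm], by rw [vv_two, hk₃.symm]⟩
  · intro h
    have := congrFun h 0
    simp only [vv_zero, Pi.zero_apply] at this
    have : m = 0 := by exact_mod_cast this
    omega

/- Axis points -/

lemma w1_mem_vrm (a b N : ℤ) (hN : 1 ≤ N) (haN : Int.gcd a N = 1) (hbN : Int.gcd b N = 1) :
    (![(N : ℝ), 0, 0]) ∈ vrm (absSet (Gamma a b N)) := by
  have hcoA : IsCoprime (N : ℤ) a := by
    rw [Int.isCoprime_iff_gcd_eq_one, Int.gcd_comm]; exact haN
  constructor
  · rw [mem_absGamma]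
    refine ⟨⟨N, -a, -b, ?_, ?_, ?_⟩, ?_⟩
    · show (N : ℝ) = _; rw [abs_of_nonneg (by omega : (0:ℤ) ≤ N)]
    · show (0 : ℝ) = _; rw [show N * a + -a * N = (0:ℤ) by ring]; simp
    · show (0 : ℝ) = _; rw [show N * b + -b * N = (0:ℤ) by ring]; simp
    · intro h
      have := congrFun h 0
      simp only [Pi.zero_apply] at this
      have hN0 : (N : ℝ) = 0 := by simpa using this
      have : N = 0 := by exact_mod_cast hN0
      omega
  · intro p hp hne hbox
    rw [mem_absGamma] at hp
    obtain ⟨⟨m₁, m₂, m₃, h0, h1, h2⟩, hp0⟩ := hp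
    rw [mem_box_singleton] at hbox
    have hb0 := hbox 0
    have hb1 := hbox 1
    have hb2 := hbox 2
    simp only [h0, h1, h2] at hb0 hb1 hb2
    have e1 : |m₁ * a + m₂ * N| = 0 := by
      have h1' : ((|m₁ * a + m₂ * N| : ℤ) : ℝ) ≤ 0 := by simpa using hb1.2
      have hle : (|m₁ * a + m₂ * N| : ℤ) ≤ 0 := by exact_mod_cast h1'
      exact le_antisymm hle (abs_nonneg _)
    have e2 : |m₁ * b + m₃ * N| = 0 := by
      have h2' : ((|m₁ * b + m₃ * N| : ℤ) : ℝ) ≤ 0 := by simpa using hb2.2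
      have hle : (|m₁ * b + m₃ * N| : ℤ) ≤ 0 := by exact_mod_cast h2'
      exact le_antisymm hle (abs_nonneg _)
    have e0 : |m₁| ≤ N := by
      have h0' : ((|m₁| : ℤ) : ℝ) ≤ (N : ℝ) := by simpa using hb0.2
      exact_mod_cast h0'
    have hdvd : N ∣ m₁ := by
      apply hcoA.dvd_of_dvd_mul_right
      have he := abs_eq_zero.mp e1
      exact ⟨-m₂, by linarith⟩
    have hm₁ : m₁ ≠ 0 := by
      intro h
      apply hp0
      funext i
      fin_cases i
      · show p 0 = 0; rw [h0, h]; simp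
      · show p 1 = 0; rw [h1, e1]; simp
      · show p 2 = 0; rw [h2, e2]; simp
    have habs : |m₁| = N := by
      have : N ≤ |m₁| := Int.le_of_dvd (abs_pos.mpr hm₁) ((dvd_abs N m₁).mpr hdvd)
      exact le_antisymm e0 this
    apply hne
    funext i
    fin_cases i
    · show p 0 = (N : ℝ); rw [h0, habs]
    · show p 1 = 0; rw [h1, e1]; simp
    · show p 2 = 0; rw [h2, e2]; simp

lemma w2_mem_vrm (a b N : ℤ) (hN : 1 ≤ N) :
    (![0, (N : ℝ), 0]) ∈ vrm (absSet (Gamma a b N)) := by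
  constructor
  · rw [mem_absGamma]
    refine ⟨⟨0, 1, 0, ?_, ?_, ?_⟩, ?_⟩
    · show (0 : ℝ) = _; simp
    · show (N : ℝ) = _; norm_num [abs_of_nonneg (by omega : (0:ℤ) ≤ N)]
    · show (0 : ℝ) = _; simp
    · intro h
      have := congrFun h 1
      simp only [Pi.zero_apply] at this
      have hN0 : (N : ℝ) = 0 := by simpa using this
      have : N = 0 := by exact_mod_cast hN0
      omega
  · intro p hp hne hbox
    rw [mem_absGamma] at hp
    obtain ⟨⟨m₁, m₂, m₃, h0, h1, h2⟩, hp0⟩ := hp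
    rw [mem_box_singleton] at hbox
    have hb0 := hbox 0
    have hb1 := hbox 1
    have hb2 := hbox 2
    simp only [h0, h1, h2] at hb0 hb1 hb2
    have e0 : |m₁| = 0 := by
      have h0' : ((|m₁| : ℤ) : ℝ) ≤ 0 := by simpa using hb0.2
      have hle : (|m₁| : ℤ) ≤ 0 := by exact_mod_cast h0'
      exact le_antisymm hle (abs_nonneg _)
    have hm₁ : m₁ = 0 := abs_eq_zero.mp e0
    subst hm₁
    have e2 : |m₃ * N| = 0 := by
      have h2' : ((|0 * b + m₃ * N| : ℤ) : ℝ) ≤ 0 := by simpa using hb2.2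
      have h2'' : (|0 * b + m₃ * N| : ℤ) ≤ 0 := by exact_mod_cast h2'
      have : |0 * b + m₃ * N| = 0 := le_antisymm h2'' (abs_nonneg _)
      simpa using this
    have hm₃ : m₃ = 0 := by
      have := abs_eq_zero.mp e2
      have : m₃ * N = 0 := this
      rcases mul_eq_zero.mp this with h | h
      · exact h
      · omega
    subst hm₃
    have e1le : |0 * a + m₂ * N| ≤ N := by
      have h1' : ((|0 * a + m₂ * N| : ℤ) : ℝ) ≤ (N : ℝ) := by simpa using hb1.2
      exact_mod_cast h1'
    have hm₂ : m₂ ≠ 0 := by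
      intro h
      apply hp0
      funext i
      fin_cases i
      · show p 0 = 0; rw [h0]; simp
      · show p 1 = 0; rw [h1, h]; simp
      · show p 2 = 0; rw [h2]; simp
    have e1 : |0 * a + m₂ * N| = N := by
      have h1ge : N ≤ |m₂ * N| := by
        rw [abs_mul, abs_of_nonneg (by omega : (0:ℤ) ≤ N)]
        nlinarith [abs_pos.mpr hm₂, abs_nonneg m₂]
      simp only [zero_mul, zero_add] at e1le ⊢
      exact le_antisymm e1le h1ge
    apply hne
    funext i
    fin_cases i
    · show p 0 = 0; rw [h0]; simp
    · show p 1 = (N : ℝ); rw [h1, e1]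
    · show p 2 = 0; rw [h2]; simp

lemma w3_mem_vrm (a b N : ℤ) (hN : 1 ≤ N) :
    (![0, 0, (N : ℝ)]) ∈ vrm (absSet (Gamma a b N)) := by
  constructor
  · rw [mem_absGamma]
    refine ⟨⟨0, 0, 1, ?_, ?_, ?_⟩, ?_⟩
    · show (0 : ℝ) = _; simp
    · show (0 : ℝ) = _; simp
    · show (N : ℝ) = _; norm_num [abs_of_nonneg (by omega : (0:ℤ) ≤ N)]
    · intro h
      have := congrFun h 2
      simp only [Pi.zero_apply] at this
      have hN0 : (N : ℝ) = 0 := by simpa using this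
      have : N = 0 := by exact_mod_cast hN0
      omega
  · intro p hp hne hbox
    rw [mem_absGamma] at hp
    obtain ⟨⟨m₁, m₂, m₃, h0, h1, h2⟩, hp0⟩ := hp
    rw [mem_box_singleton] at hbox
    have hb0 := hbox 0
    have hb1 := hbox 1
    have hb2 := hbox 2
    simp only [h0, h1, h2] at hb0 hb1 hb2
    have e0 : |m₁| = 0 := by
      have h0' : ((|m₁| : ℤ) : ℝ) ≤ 0 := by simpa using hb0.2
      have hle : (|m₁| : ℤ) ≤ 0 := by exact_mod_cast h0'
      exact le_antisymm hle (abs_nonneg _)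
    have hm₁ : m₁ = 0 := abs_eq_zero.mp e0
    subst hm₁
    have e1 : |m₂ * N| = 0 := by
      have h1' : ((|0 * a + m₂ * N| : ℤ) : ℝ) ≤ 0 := by simpa using hb1.2
      have h1'' : (|0 * a + m₂ * N| : ℤ) ≤ 0 := by exact_mod_cast h1'
      have : |0 * a + m₂ * N| = 0 := le_antisymm h1'' (abs_nonneg _)
      simpa using this
    have hm₂ : m₂ = 0 := by
      have : m₂ * N = 0 := abs_eq_zero.mp e1
      rcases mul_eq_zero.mp this with h | h
      · exact h
      · omega
    subst hm₂
    have e2le : |0 * b + m₃ * N| ≤ N := by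
      have h2' : ((|0 * b + m₃ * N| : ℤ) : ℝ) ≤ (N : ℝ) := by simpa using hb2.2
      exact_mod_cast h2'
    have hm₃ : m₃ ≠ 0 := by
      intro h
      apply hp0
      funext i
      fin_cases i
      · show p 0 = 0; rw [h0]; simp
      · show p 1 = 0; rw [h1]; simp
      · show p 2 = 0; rw [h2, h]; simp
    have e2 : |0 * b + m₃ * N| = N := by
      have h2ge : N ≤ |m₃ * N| := by
        rw [abs_mul, abs_of_nonneg (by omega : (0:ℤ) ≤ N)]
        nlinarith [abs_pos.mpr hm₃, abs_nonneg m₃]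
      simp only [zero_mul, zero_add] at e2le ⊢
      exact le_antisymm e2le h2ge
    apply hne
    funext i
    fin_cases i
    · show p 0 = 0; rw [h0]; simp
    · show p 1 = 0; rw [h1]; simp
    · show p 2 = (N : ℝ); rw [h2, e2]

/- ### classification -/

lemma int_eq_zero_of_dvd_small {N x : ℤ} (hN : 0 < N) (h : N ∣ x) (h1 : -N < x) (h2 : x < N) :
    x = 0 := by
  obtain ⟨k, hk⟩ := h
  subst hk
  rcases lt_trichotomy k 0 with hk0 | hk0 | hk0
  · nlinarith
  · simp [hk0]
  · nlinarith

lemma classify_pos (a b N : ℤ) (hN : 1 ≤ N) {g : Fin 3 → ℝ}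
    (hg : g ∈ vrm (absSet (Gamma a b N)))
    (m₁ m₂ m₃ : ℤ) (hm : 1 ≤ m₁)
    (h0 : g 0 = ((m₁ : ℤ) : ℝ)) (h1 : g 1 = ((|m₁ * a + m₂ * N| : ℤ) : ℝ))
    (h2 : g 2 = ((|m₁ * b + m₃ * N| : ℤ) : ℝ)) :
    ∃ m : ℤ, 1 ≤ m ∧ m ≤ N ∧ g = vv a b N m := by
  have hNpos : (0:ℤ) < N := by omega
  obtain ⟨m', hm'1, hm'N, hm'le, hdvd⟩ :
      ∃ m', 1 ≤ m' ∧ m' ≤ N ∧ m' ≤ m₁ ∧ N ∣ m₁ - m' := by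
    by_cases hd : N ∣ m₁
    · exact ⟨N, hN, le_refl N, Int.le_of_dvd (by omega) hd, dvd_sub hd dvd_rfl⟩
    · refine ⟨m₁ % N, ?_, ?_, ?_, ⟨m₁ / N, by rw [Int.emod_def]; ring⟩⟩
      · have h1 := Int.emod_nonneg m₁ hNpos.ne'
        have h2 : m₁ % N ≠ 0 := fun h => hd (Int.dvd_of_emod_eq_zero h)
        omega
      · exact (Int.emod_lt_of_pos m₁ hNpos).le
      · exact emod_le_self' hNpos (by omega)
  have key1 : distN N (m' * a) ≤ |m₁ * a + m₂ * N| := by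
    rw [← distN_mul_congr (Or.inl hdvd)]
    exact distN_le_abs hNpos ⟨m₂, by ring⟩
  have key2 : distN N (m' * b) ≤ |m₁ * b + m₃ * N| := by
    rw [← distN_mul_congr (Or.inl hdvd)]
    exact distN_le_abs hNpos ⟨m₃, by ring⟩
  have hbox : vv a b N m' ∈ box {g} := by
    rw [mem_box_singleton]
    intro i
    fin_cases i
    · constructor
      · show (0:ℝ) ≤ ((m' : ℤ) : ℝ); exact_mod_cast by omega
      · show ((m' : ℤ) : ℝ) ≤ g 0; rw [h0]; exact_mod_cast hm'le
    · constructor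
      · show (0:ℝ) ≤ ((distN N (m' * a) : ℤ) : ℝ); exact_mod_cast distN_nonneg hNpos
      · show ((distN N (m' * a) : ℤ) : ℝ) ≤ g 1; rw [h1]; exact_mod_cast key1
    · constructor
      · show (0:ℝ) ≤ ((distN N (m' * b) : ℤ) : ℝ); exact_mod_cast distN_nonneg hNpos
      · show ((distN N (m' * b) : ℤ) : ℝ) ≤ g 2; rw [h2]; exact_mod_cast key2
  have heq : vv a b N m' = g := by
    by_contra hne
    exact hg.2 (vv a b N m') (vv_mem a b N hN hm'1) hne hbox
  exact ⟨m', hm'1, hm'N, heq.symm⟩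

lemma vrm_classify (a b N : ℤ) (hN : 1 ≤ N) {g : Fin 3 → ℝ}
    (hg : g ∈ vrm (absSet (Gamma a b N))) :
    (∃ m : ℤ, 1 ≤ m ∧ m ≤ N ∧ g = vv a b N m) ∨
      g = ![0, (N : ℝ), 0] ∨ g = ![0, 0, (N : ℝ)] := by
  have hNpos : (0:ℤ) < N := by omega
  obtain ⟨⟨m₁, m₂, m₃, h0, h1, h2⟩, hg0⟩ := (mem_absGamma a b N g).mp hg.1
  rcases lt_trichotomy m₁ 0 with hneg | hzero | hpos
  · left
    have h0' : g 0 = ((-m₁ : ℤ) : ℝ) := by rw [h0, abs_of_neg hneg]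
    have h1' : g 1 = ((|(-m₁) * a + (-m₂) * N| : ℤ) : ℝ) := by
      rw [h1, show (-m₁) * a + (-m₂) * N = -(m₁ * a + m₂ * N) by ring, abs_neg]
    have h2' : g 2 = ((|(-m₁) * b + (-m₃) * N| : ℤ) : ℝ) := by
      rw [h2, show (-m₁) * b + (-m₃) * N = -(m₁ * b + m₃ * N) by ring, abs_neg]
    exact classify_pos a b N hN hg (-m₁) (-m₂) (-m₃) (by omega) h0' h1' h2'
  · subst hzero
    right
    have h0' : g 0 = 0 := by rw [h0]; simp
    have h1' : g 1 = ((|m₂ * N| : ℤ) : ℝ) := by rw [h1]; norm_num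
    have h2' : g 2 = ((|m₃ * N| : ℤ) : ℝ) := by rw [h2]; norm_num
    by_cases hm₂ : m₂ = 0
    · by_cases hm₃ : m₃ = 0
      · exfalso
        apply hg0
        funext i
        fin_cases i
        · show g 0 = 0; rw [h0']
        · show g 1 = 0; rw [h1', hm₂]; simp
        · show g 2 = 0; rw [h2', hm₃]; simp
      · -- g = w3
        right
        have hge : N ≤ |m₃ * N| := by
          rw [abs_mul, abs_of_nonneg hNpos.le]
          nlinarith [abs_pos.mpr hm₃, abs_nonneg m₃]
        by_contra hne
        apply hg.2 (![0, 0, (N : ℝ)]) (w3_mem_vrm a b N hN).1 (fun h => hne h.symm)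
        rw [mem_box_singleton]
        intro i
        fin_cases i
        · show 0 ≤ (0:ℝ) ∧ (0:ℝ) ≤ g 0
          rw [h0']; norm_num
        · show 0 ≤ (0:ℝ) ∧ (0:ℝ) ≤ g 1
          rw [h1']; norm_num; positivity
        · show 0 ≤ ((N:ℤ):ℝ) ∧ ((N:ℤ):ℝ) ≤ g 2
          rw [h2']
          constructor
          · exact_mod_cast hNpos.le
          · exact_mod_cast hge
    · by_cases hm₃ : m₃ = 0
      · -- g = w2
        left
        have hge : N ≤ |m₂ * N| := by
          rw [abs_mul, abs_of_nonneg hNpos.le]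
          nlinarith [abs_pos.mpr hm₂, abs_nonneg m₂]
        by_contra hne
        apply hg.2 (![0, (N : ℝ), 0]) (w2_mem_vrm a b N hN).1 (fun h => hne h.symm)
        rw [mem_box_singleton]
        intro i
        fin_cases i
        · show 0 ≤ (0:ℝ) ∧ (0:ℝ) ≤ g 0
          rw [h0']; norm_num
        · show 0 ≤ ((N:ℤ):ℝ) ∧ ((N:ℤ):ℝ) ≤ g 1
          rw [h1']
          constructor
          · exact_mod_cast hNpos.le
          · exact_mod_cast hge
        · show 0 ≤ (0:ℝ) ∧ (0:ℝ) ≤ g 2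
          rw [h2']; norm_num; positivity
      · -- both nonzero: contradiction via w2
        exfalso
        have hge1 : N ≤ |m₂ * N| := by
          rw [abs_mul, abs_of_nonneg hNpos.le]
          nlinarith [abs_pos.mpr hm₂, abs_nonneg m₂]
        have hge2 : (1:ℤ) ≤ |m₃ * N| := by
          have : m₃ * N ≠ 0 := mul_ne_zero hm₃ (by omega)
          have := abs_pos.mpr this
          omega
        have hne : ![0, (N : ℝ), 0] ≠ g := by
          intro h
          have := congrFun h 2
          rw [h2'] at this
          have h2'' : ((0:ℤ):ℝ) = ((|m₃ * N| : ℤ) : ℝ) := by simpa using this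
          have : (0:ℤ) = |m₃ * N| := by exact_mod_cast h2''
          omega
        apply hg.2 (![0, (N : ℝ), 0]) (w2_mem_vrm a b N hN).1 hne
        rw [mem_box_singleton]
        intro i
        fin_cases i
        · show 0 ≤ (0:ℝ) ∧ (0:ℝ) ≤ g 0
          rw [h0']; norm_num
        · show 0 ≤ ((N:ℤ):ℝ) ∧ ((N:ℤ):ℝ) ≤ g 1
          rw [h1']
          constructor
          · exact_mod_cast hNpos.le
          · exact_mod_cast hge1
        · show 0 ≤ (0:ℝ) ∧ (0:ℝ) ≤ g 2
          rw [h2']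
          constructor
          · norm_num
          · exact_mod_cast (abs_nonneg (m₃ * N))
  · left
    have h0' : g 0 = ((m₁ : ℤ) : ℝ) := by rw [h0, abs_of_pos hpos]
    exact classify_pos a b N hN hg m₁ m₂ m₃ (by omega) h0' h1 h2

/-- Domination: if `m < m'` but the two `vv`-points agree in the last two
coordinates, then `vv m'` is not a relative minimum. -/
lemma vv_lt_not_vrm (a b N : ℤ) (hN : 1 ≤ N) {m m' : ℤ} (hm : 1 ≤ m) (hlt : m < m')
    (e1 : distN N (m * a) = distN N (m' * a)) (e2 : distN N (m * b) = distN N (m' * b)) :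
    vv a b N m' ∉ vrm (absSet (Gamma a b N)) := by
  have hNpos : (0:ℤ) < N := by omega
  intro hv
  apply hv.2 (vv a b N m) (vv_mem a b N hN hm)
  · intro h
    have := congrFun h 0
    simp only [vv_zero] at this
    have : m = m' := by exact_mod_cast this
    omega
  · rw [mem_box_singleton]
    intro i
    fin_cases i
    · constructor
      · show (0:ℝ) ≤ ((m : ℤ) : ℝ); exact_mod_cast by omega
      · show ((m : ℤ) : ℝ) ≤ ((m' : ℤ) : ℝ); exact_mod_cast hlt.le
    · constructor
      · show (0:ℝ) ≤ ((distN N (m * a) : ℤ) : ℝ); exact_mod_cast distN_nonneg hNpos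
      · show ((distN N (m * a) : ℤ) : ℝ) ≤ ((distN N (m' * a) : ℤ) : ℝ)
        exact_mod_cast e1.le
    · constructor
      · show (0:ℝ) ≤ ((distN N (m * b) : ℤ) : ℝ); exact_mod_cast distN_nonneg hNpos
      · show ((distN N (m * b) : ℤ) : ℝ) ≤ ((distN N (m' * b) : ℤ) : ℝ)
        exact_mod_cast e2.le

lemma key_sum (a N m m' : ℤ) (hN : 1 ≤ N) (hco : IsCoprime N a)
    (hm : 1 ≤ m) (hmN : m < N) (hm' : 1 ≤ m') (hm'N : m' < N)
    (he : distN N (m * a) = distN N (m' * a)) :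
    m = m' ∨ N ∣ m + m' := by
  rcases distN_inj he with h | h
  · left
    have h' : N ∣ (m - m') * a := by rw [sub_mul]; exact h
    have hd : N ∣ m - m' := hco.dvd_of_dvd_mul_right h'
    have := int_eq_zero_of_dvd_small (by omega) hd (by omega) (by omega)
    omega
  · right
    have h' : N ∣ (m + m') * a := by rw [add_mul]; exact h
    exact hco.dvd_of_dvd_mul_right h'

lemma vv_N_eq (a b N : ℤ) : vv a b N N = ![(N : ℝ), 0, 0] := by
  funext i
  fin_cases i
  · rfl
  · show ((distN N (N * a) : ℤ) : ℝ) = 0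
    rw [distN_eq_zero (dvd_mul_right N a)]; simp
  · show ((distN N (N * b) : ℤ) : ℝ) = 0
    rw [distN_eq_zero (dvd_mul_right N b)]; simp


/-- Let `a, b, N` be positive integers such that both `a` and `b` are coprime to
`N`. Then `vrm(|Γ(a,b,N)|)` is a finite axial subset of `ℝ³_{≥0}` in general
position. -/
theorem vrm_finite_axial_generalPosition
    (a b N : ℤ) (ha : 1 ≤ a) (hb : 1 ≤ b) (hN : 1 ≤ N)
    (haN : Int.gcd a N = 1) (hbN : Int.gcd b N = 1) :
    (vrm (absSet (Gamma a b N))).Finite ∧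
      (∀ p ∈ vrm (absSet (Gamma a b N)), ∀ i, 0 ≤ p i) ∧
      Axial (vrm (absSet (Gamma a b N))) ∧
      GeneralPosition (vrm (absSet (Gamma a b N))) := by
  have hNpos : (0:ℤ) < N := by omega
  have hcoA : IsCoprime (N : ℤ) a := by
    rw [Int.isCoprime_iff_gcd_eq_one, Int.gcd_comm]; exact haN
  have hcoB : IsCoprime (N : ℤ) b := by
    rw [Int.isCoprime_iff_gcd_eq_one, Int.gcd_comm]; exact hbN
  have hNR : (0:ℝ) < (N : ℝ) := by exact_mod_cast hNpos
  refine ⟨?_, ?_, ?_, ?_, ?_⟩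
  · -- Finite
    apply Set.Finite.subset
      (Set.Finite.union ((Set.finite_Icc (1:ℤ) N).image (vv a b N))
        ((Set.finite_singleton (![0, (N:ℝ), 0])).insert (![0, 0, (N:ℝ)])))
    intro g hg
    rcases vrm_classify a b N hN hg with ⟨m, h1, h2, rfl⟩ | h | h
    · exact Or.inl ⟨m, ⟨h1, h2⟩, rfl⟩
    · exact Or.inr (by rw [h]; exact Set.mem_insert_iff.mpr (Or.inr rfl))
    · exact Or.inr (by rw [h]; exact Set.mem_insert _ _)
  · -- Nonneg
    intro p hp i
    obtain ⟨⟨m₁, m₂, m₃, h0, h1, h2⟩, -⟩ := (mem_absGamma a b N p).mp hp.1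
    fin_cases i
    · show (0:ℝ) ≤ p 0; rw [h0]; exact_mod_cast abs_nonneg m₁
    · show (0:ℝ) ≤ p 1; rw [h1]; exact_mod_cast abs_nonneg _
    · show (0:ℝ) ≤ p 2; rw [h2]; exact_mod_cast abs_nonneg _
  · -- Axial
    intro j
    fin_cases j
    · refine ⟨![(N:ℝ), 0, 0], w1_mem_vrm a b N hN haN hbN, ?_⟩
      intro k hk
      fin_cases k
      · simp at hk
      · rfl
      · rfl
    · refine ⟨![0, (N:ℝ), 0], w2_mem_vrm a b N hN, ?_⟩
      intro k hk
      fin_cases k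
      · rfl
      · simp at hk
      · rfl
    · refine ⟨![0, 0, (N:ℝ)], w3_mem_vrm a b N hN, ?_⟩
      intro k hk
      fin_cases k
      · rfl
      · rfl
      · simp at hk
  · -- GeneralPosition (i)
    intro i
    fin_cases i
    · -- plane x₀ = 0
      refine ⟨![0, (N:ℝ), 0], ![0, 0, (N:ℝ)], ?_, ?_, 1, 2, by decide, by decide, by decide,
        ⟨?_, ?_⟩, ⟨?_, ?_⟩⟩
      · intro h
        have := congrFun h 1
        simp only [Matrix.cons_val_one, Matrix.head_cons] at this
        exact hNR.ne' (by simpa using this)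
      · ext r
        simp only [Set.mem_setOf_eq, Set.mem_insert_iff, Set.mem_singleton_iff]
        constructor
        · rintro ⟨hr, hr0⟩
          rcases vrm_classify a b N hN hr with ⟨m, h1, h2, rfl⟩ | h | h
          · exfalso
            have : (m : ℝ) = 0 := hr0
            have : m = 0 := by exact_mod_cast this
            omega
          · exact Or.inl h
          · exact Or.inr h
        · rintro (rfl | rfl)
          · exact ⟨w2_mem_vrm a b N hN, rfl⟩
          · exact ⟨w3_mem_vrm a b N hN, rfl⟩
      · intro h
        have := congrFun h 1
        simp only [Pi.zero_apply, Matrix.cons_val_one, Matrix.head_cons] at this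
        exact hNR.ne' (by simpa using this)
      · intro k hk
        fin_cases k
        · rfl
        · simp at hk
        · rfl
      · intro h
        have := congrFun h 2
        simp only [Pi.zero_apply] at this
        exact hNR.ne' (by simpa using this)
      · intro k hk
        fin_cases k
        · rfl
        · rfl
        · simp at hk
    · -- plane x₁ = 0
      refine ⟨![(N:ℝ), 0, 0], ![0, 0, (N:ℝ)], ?_, ?_, 0, 2, by decide, by decide, by decide,
        ⟨?_, ?_⟩, ⟨?_, ?_⟩⟩
      · intro h
        have := congrFun h 0
        simp only [Matrix.cons_val_zero] at this
        exact hNR.ne' (by simpa using this)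
      · ext r
        simp only [Set.mem_setOf_eq, Set.mem_insert_iff, Set.mem_singleton_iff]
        constructor
        · rintro ⟨hr, hr0⟩
          rcases vrm_classify a b N hN hr with ⟨m, h1, h2, rfl⟩ | h | h
          · left
            have hd0 : ((distN N (m * a) : ℤ) : ℝ) = 0 := hr0
            have hd : distN N (m * a) = 0 := by exact_mod_cast hd0
            have hdr : N ∣ m := hcoA.dvd_of_dvd_mul_right (dvd_of_distN_eq_zero hd)
            have hmN : m = N := by
              have := Int.le_of_dvd (by omega) hdr
              omega
            rw [hmN, vv_N_eq]
          · exfalso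
            rw [h] at hr0
            exact hNR.ne' (by simpa using hr0)
          · exact Or.inr h
        · rintro (rfl | rfl)
          · exact ⟨w1_mem_vrm a b N hN haN hbN, rfl⟩
          · exact ⟨w3_mem_vrm a b N hN, rfl⟩
      · intro h
        have := congrFun h 0
        simp only [Pi.zero_apply, Matrix.cons_val_zero] at this
        exact hNR.ne' (by simpa using this)
      · intro k hk
        fin_cases k
        · simp at hk
        · rfl
        · rfl
      · intro h
        have := congrFun h 2
        simp only [Pi.zero_apply] at this
        exact hNR.ne' (by simpa using this)
      · intro k hk
        fin_cases k
        · rfl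
        · rfl
        · simp at hk
    · -- plane x₂ = 0
      refine ⟨![(N:ℝ), 0, 0], ![0, (N:ℝ), 0], ?_, ?_, 0, 1, by decide, by decide, by decide,
        ⟨?_, ?_⟩, ⟨?_, ?_⟩⟩
      · intro h
        have := congrFun h 0
        simp only [Matrix.cons_val_zero] at this
        exact hNR.ne' (by simpa using this)
      · ext r
        simp only [Set.mem_setOf_eq, Set.mem_insert_iff, Set.mem_singleton_iff]
        constructor
        · rintro ⟨hr, hr0⟩
          rcases vrm_classify a b N hN hr with ⟨m, h1, h2, rfl⟩ | h | h
          · left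
            have hd0 : ((distN N (m * b) : ℤ) : ℝ) = 0 := hr0
            have hd : distN N (m * b) = 0 := by exact_mod_cast hd0
            have hdr : N ∣ m := hcoB.dvd_of_dvd_mul_right (dvd_of_distN_eq_zero hd)
            have hmN : m = N := by
              have := Int.le_of_dvd (by omega) hdr
              omega
            rw [hmN, vv_N_eq]
          · exact Or.inr h
          · exfalso
            rw [h] at hr0
            exact hNR.ne' (by simpa using hr0)
        · rintro (rfl | rfl)
          · exact ⟨w1_mem_vrm a b N hN haN hbN, rfl⟩
          · exact ⟨w2_mem_vrm a b N hN, rfl⟩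
      · intro h
        have := congrFun h 0
        simp only [Pi.zero_apply, Matrix.cons_val_zero] at this
        exact hNR.ne' (by simpa using this)
      · intro k hk
        fin_cases k
        · simp at hk
        · rfl
        · rfl
      · intro h
        have := congrFun h 1
        simp only [Pi.zero_apply] at this
        exact hNR.ne' (by simpa using this)
      · intro k hk
        fin_cases k
        · rfl
        · simp at hk
        · rfl
  · -- GeneralPosition (ii)
    intro i c hc r hr s hs
    obtain ⟨hrV, hrc⟩ := hr
    obtain ⟨hsV, hsc⟩ := hs
    fin_cases i
    · -- planes x₀ = c
      rcases vrm_classify a b N hN hrV with ⟨m, hm1, hmN, rfl⟩ | h | h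
      · rcases vrm_classify a b N hN hsV with ⟨m', hm'1, hm'N, rfl⟩ | h' | h'
        · have h1 : (m : ℝ) = c := hrc
          have h2 : (m' : ℝ) = c := hsc
          have : m = m' := by exact_mod_cast h1.trans h2.symm
          rw [this]
        · exfalso; rw [h'] at hsc
          exact hc (by simpa using hsc.symm)
        · exfalso; rw [h'] at hsc
          exact hc (by simpa using hsc.symm)
      · exfalso; rw [h] at hrc
        exact hc (by simpa using hrc.symm)
      · exfalso; rw [h] at hrc
        exact hc (by simpa using hrc.symm)
    · -- planes x₁ = c
      rcases vrm_classify a b N hN hrV with ⟨m, hm1, hmN, rfl⟩ | h | h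
      · have hdc : ((distN N (m * a) : ℤ) : ℝ) = c := hrc
        have hd_ne : distN N (m * a) ≠ 0 := by
          intro h
          apply hc
          rw [← hdc, h]; simp
        have hmltN : m < N := by
          rcases eq_or_lt_of_le hmN with h | h
          · exfalso; exact hd_ne (by rw [h]; exact distN_eq_zero (dvd_mul_right N a))
          · exact h
        rcases vrm_classify a b N hN hsV with ⟨m', hm'1, hm'N, rfl⟩ | h' | h'
        · have hd'c : ((distN N (m' * a) : ℤ) : ℝ) = c := hsc
          have he : distN N (m * a) = distN N (m' * a) := by
            exact_mod_cast hdc.trans hd'c.symm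
          have hd'_ne : distN N (m' * a) ≠ 0 := he ▸ hd_ne
          have hm'ltN : m' < N := by
            rcases eq_or_lt_of_le hm'N with h | h
            · exfalso
              exact hd'_ne (by rw [h]; exact distN_eq_zero (dvd_mul_right N a))
            · exact h
          rcases key_sum a N m m' hN hcoA hm1 hmltN hm'1 hm'ltN he with heq | hsum
          · rw [heq]
          · have he2 : distN N (m * b) = distN N (m' * b) := distN_mul_congr (Or.inr hsum)
            rcases lt_trichotomy m m' with hlt | heq | hgt
            · exact absurd hsV (vv_lt_not_vrm a b N hN hm1 hlt he he2)
            · rw [heq]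
            · exact absurd hrV (vv_lt_not_vrm a b N hN hm'1 hgt he.symm he2.symm)
        · exfalso
          rw [h'] at hsc
          have hcN : (N : ℝ) = c := by simpa using hsc
          have : distN N (m * a) = N := by exact_mod_cast hdc.trans hcN.symm
          exact absurd this (distN_lt hNpos).ne
        · exfalso
          rw [h'] at hsc
          exact hc (by simpa using hsc.symm)
      · rw [h] at hrc
        have hcN : (N : ℝ) = c := by simpa using hrc
        rcases vrm_classify a b N hN hsV with ⟨m', hm'1, hm'N, rfl⟩ | h' | h'
        · exfalso
          have hd'c : ((distN N (m' * a) : ℤ) : ℝ) = c := hsc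
          have : distN N (m' * a) = N := by exact_mod_cast hd'c.trans hcN.symm
          exact absurd this (distN_lt hNpos).ne
        · rw [h, h']
        · exfalso
          rw [h'] at hsc
          exact hc (by simpa using hsc.symm)
      · exfalso
        rw [h] at hrc
        exact hc (by simpa using hrc.symm)
    · -- planes x₂ = c
      rcases vrm_classify a b N hN hrV with ⟨m, hm1, hmN, rfl⟩ | h | h
      · have hdc : ((distN N (m * b) : ℤ) : ℝ) = c := hrc
        have hd_ne : distN N (m * b) ≠ 0 := by
          intro h
          apply hc
          rw [← hdc, h]; simp
        have hmltN : m < N := by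
          rcases eq_or_lt_of_le hmN with h | h
          · exfalso; exact hd_ne (by rw [h]; exact distN_eq_zero (dvd_mul_right N b))
          · exact h
        rcases vrm_classify a b N hN hsV with ⟨m', hm'1, hm'N, rfl⟩ | h' | h'
        · have hd'c : ((distN N (m' * b) : ℤ) : ℝ) = c := hsc
          have he : distN N (m * b) = distN N (m' * b) := by
            exact_mod_cast hdc.trans hd'c.symm
          have hd'_ne : distN N (m' * b) ≠ 0 := he ▸ hd_ne
          have hm'ltN : m' < N := by
            rcases eq_or_lt_of_le hm'N with h | h
            · exfalso
              exact hd'_ne (by rw [h]; exact distN_eq_zero (dvd_mul_right N b))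
            · exact h
          rcases key_sum b N m m' hN hcoB hm1 hmltN hm'1 hm'ltN he with heq | hsum
          · rw [heq]
          · have he1 : distN N (m * a) = distN N (m' * a) := distN_mul_congr (Or.inr hsum)
            rcases lt_trichotomy m m' with hlt | heq | hgt
            · exact absurd hsV (vv_lt_not_vrm a b N hN hm1 hlt he1 he)
            · rw [heq]
            · exact absurd hrV (vv_lt_not_vrm a b N hN hm'1 hgt he1.symm he.symm)
        · exfalso
          rw [h'] at hsc
          exact hc (by simpa using hsc.symm)
        · exfalso
          rw [h'] at hsc
          have hcN : (N : ℝ) = c := by simpa using hsc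
          have : distN N (m * b) = N := by exact_mod_cast hdc.trans hcN.symm
          exact absurd this (distN_lt hNpos).ne
      · exfalso
        rw [h] at hrc
        exact hc (by simpa using hrc.symm)
      · rw [h] at hrc
        have hcN : (N : ℝ) = c := by simpa using hrc
        rcases vrm_classify a b N hN hsV with ⟨m', hm'1, hm'N, rfl⟩ | h' | h'
        · exfalso
          have hd'c : ((distN N (m' * b) : ℤ) : ℝ) = c := hsc
          have : distN N (m' * b) = N := by exact_mod_cast hd'c.trans hcN.symm
          exact absurd this (distN_lt hNpos).ne
        · exfalso
          rw [h'] at hsc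
          exact hc (by simpa using hsc.symm)
        · rw [h, h']
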